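/- Let 0 < s < 1, 1 < p < ∞, and let Ω ⊂ ℝ^n be open and bounded. There is a constant C = C(n,p,s) such that for every u ∈ W^{s,p}(ℝ^n) vanishing a.e. outside Ω: ‖u‖_{L^p(Ω)}^p ≤ C·|Ω|^(sp/n)·[u]_{W^{s,p}(ℝ^n)}^p. -/

import Mathlib

open Real MeasureTheory
open scoped ENNReal

/-- The `p`-th power of the Gagliardo (Sobolev–Slobodeckiĭ) seminorm
`[u]_{W^{s,p}(ℝ^n)}^p`. -/
noncomputable def gagliardoP (n : ℕ) (s p : ℝ) (u : EuclideanSpace ℝ (Fin n) → ℝ) : ℝ :=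
  ∫ q : EuclideanSpace ℝ (Fin n) × EuclideanSpace ℝ (Fin n),
    |u q.1 - u q.2| ^ p / ‖q.1 - q.2‖ ^ ((n : ℝ) + s * p)

theorem stmt15 (n : ℕ) (hn : 0 < n) (s p : ℝ) (hs0 : 0 < s) (hs1 : s < 1) (hp : 1 < p) :
    ∃ C : ℝ, 0 < C ∧
      ∀ (Ω : Set (EuclideanSpace ℝ (Fin n))) (u : EuclideanSpace ℝ (Fin n) → ℝ),
        IsOpen Ω → Bornology.IsBounded Ω →
        Measurable u →
        (∀ᵐ x, x ∉ Ω → u x = 0) →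
        Integrable (fun x => |u x| ^ p) →
        Integrable (fun q : EuclideanSpace ℝ (Fin n) × EuclideanSpace ℝ (Fin n) =>
          |u q.1 - u q.2| ^ p / ‖q.1 - q.2‖ ^ ((n : ℝ) + s * p)) →
        ∫ x in Ω, |u x| ^ p
          ≤ C * (volume Ω).toReal ^ (s * p / n) * gagliardoP n s p u := by
  have hp0 : (0:ℝ) < p := lt_trans one_pos hp
  have hn0 : (0:ℝ) < n := Nat.cast_pos.mpr hn
  have hnsp : (0:ℝ) < (n:ℝ) + s * p := by positivity
  haveI : Nonempty (Fin n) := ⟨⟨0, hn⟩⟩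
  set ιe : ℝ≥0∞ := volume (Metric.ball (0 : EuclideanSpace ℝ (Fin n)) 1) with hιe
  have hιe_pos : 0 < ιe := Metric.measure_ball_pos _ _ one_pos
  have hιe_fin : ιe ≠ ⊤ := measure_ball_lt_top.ne
  set ι : ℝ := ιe.toReal with hι_def
  have hι : 0 < ι := ENNReal.toReal_pos hιe_pos.ne' hιe_fin
  refine ⟨(2 / ι) ^ (((n:ℝ) + s * p) / n), by positivity, ?_⟩
  intro Ω u hΩopen hΩbdd hu hu0 hInt hIntG
  have hgnn : ∀ q : EuclideanSpace ℝ (Fin n) × EuclideanSpace ℝ (Fin n),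
      0 ≤ |u q.1 - u q.2| ^ p / ‖q.1 - q.2‖ ^ ((n : ℝ) + s * p) := fun q => by positivity
  have hG0 : 0 ≤ gagliardoP n s p u := integral_nonneg hgnn
  by_cases hΩ0 : volume Ω = 0
  · have hz : ∫ x in Ω, |u x| ^ p = 0 := by
      rw [Measure.restrict_eq_zero.mpr hΩ0]; exact integral_zero_measure _
    rw [hz, hΩ0]
    simp [Real.zero_rpow (by positivity : (0:ℝ) < s * p / n).ne']
  -- main case
  have hΩmeas : MeasurableSet Ω := hΩopen.measurableSet
  have hM_fin : volume Ω ≠ ⊤ := hΩbdd.measure_lt_top.ne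
  set m : ℝ := (volume Ω).toReal with hm_def
  have hm : 0 < m := ENNReal.toReal_pos hΩ0 hM_fin
  set R : ℝ := (2 * m / ι) ^ (1 / (n:ℝ)) with hR_def
  have hR : 0 < R := by positivity
  have hball : ∀ x : EuclideanSpace ℝ (Fin n),
      volume (Metric.ball x R) = 2 * volume Ω := by
    intro x
    rw [Measure.addHaar_ball volume x hR.le, finrank_euclideanSpace_fin]
    have h1 : R ^ n = 2 * m / ι := by
      rw [← Real.rpow_natCast R n, hR_def, ← Real.rpow_mul (by positivity),
        one_div, inv_mul_cancel₀ hn0.ne', Real.rpow_one]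
    rw [h1, ← hιe, ← ENNReal.ofReal_toReal hιe_fin, ← hι_def,
      ← ENNReal.ofReal_mul (by positivity), div_mul_cancel₀ _ hι.ne',
      ENNReal.ofReal_mul (by norm_num : (0:ℝ) ≤ 2), hm_def,
      ENNReal.ofReal_toReal hM_fin, ENNReal.ofReal_ofNat]
  set K : ℝ := R ^ ((n:ℝ) + s * p) with hK_def
  have hK : 0 < K := Real.rpow_pos_of_pos hR _
  set g : EuclideanSpace ℝ (Fin n) × EuclideanSpace ℝ (Fin n) → ℝ≥0∞ :=
    fun q => ENNReal.ofReal (|u q.1 - u q.2| ^ p / ‖q.1 - q.2‖ ^ ((n : ℝ) + s * p)) with hg_def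
  have hgm : Measurable g := by fun_prop
  -- key pointwise-in-x estimate
  have key : ∀ x : EuclideanSpace ℝ (Fin n),
      ENNReal.ofReal (|u x| ^ p) * volume Ω ≤ ENNReal.ofReal K * ∫⁻ y, g (x, y) := by
    intro x
    set T : Set (EuclideanSpace ℝ (Fin n)) := Metric.ball x R \ Ω with hT_def
    have hTmeas : MeasurableSet T := measurableSet_ball.diff hΩmeas
    have hTvol : volume Ω ≤ volume T := by
      calc volume Ω = 2 * volume Ω - volume Ω := by
            rw [two_mul, ENNReal.add_sub_cancel_right hM_fin]
        _ = volume (Metric.ball x R) - volume Ω := by rw [hball]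
        _ ≤ volume T := le_measure_diff
    calc ENNReal.ofReal (|u x| ^ p) * volume Ω
        ≤ ENNReal.ofReal (|u x| ^ p) * volume T := mul_le_mul_right hTvol _
      _ = ∫⁻ _ in T, ENNReal.ofReal (|u x| ^ p) := (setLIntegral_const T _).symm
      _ = ∫⁻ y in T, ENNReal.ofReal (|u x - u y| ^ p) := by
          refine lintegral_congr_ae ?_
          filter_upwards [ae_restrict_of_ae hu0, ae_restrict_mem hTmeas] with y hy hyT
          rw [hy hyT.2, sub_zero]
      _ ≤ ∫⁻ y in T, ENNReal.ofReal K * g (x, y) := by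
          refine lintegral_mono_ae ?_
          filter_upwards [ae_restrict_mem hTmeas] with y hyT
          rcases eq_or_ne y x with rfl | hyx
          · simp [Real.zero_rpow hp0.ne']
          · have hxy : (0:ℝ) < ‖x - y‖ := by
              rw [norm_pos_iff, sub_ne_zero]; exact fun h => hyx h.symm
            have hlt : ‖x - y‖ < R := by
              have h2 := hyT.1
              rwa [Metric.mem_ball, dist_eq_norm, ← norm_neg, neg_sub] at h2
            have hden : ‖x - y‖ ^ ((n:ℝ) + s*p) ≤ K :=
              Real.rpow_le_rpow hxy.le hlt.le hnsp.le
            have hdenpos : (0:ℝ) < ‖x - y‖ ^ ((n:ℝ) + s*p) := Real.rpow_pos_of_pos hxy _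
            rw [hg_def, ← ENNReal.ofReal_mul hK.le]
            refine ENNReal.ofReal_le_ofReal ?_
            have hpr : ‖(x, y).1 - (x, y).2‖ = ‖x - y‖ := rfl
            rw [hpr]
            calc |u x - u y| ^ p
                = |u x - u y| ^ p / ‖x - y‖ ^ ((n:ℝ) + s*p) * (‖x - y‖ ^ ((n:ℝ) + s*p)) :=
                  (div_mul_cancel₀ _ hdenpos.ne').symm
              _ ≤ |u x - u y| ^ p / ‖x - y‖ ^ ((n:ℝ) + s*p) * K :=
                  mul_le_mul_of_nonneg_left hden (by positivity)
              _ = K * (|u x - u y| ^ p / ‖x - y‖ ^ ((n:ℝ) + s*p)) := mul_comm _ _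
      _ = ENNReal.ofReal K * ∫⁻ y in T, g (x, y) :=
          lintegral_const_mul' _ _ ENNReal.ofReal_ne_top
      _ ≤ ENNReal.ofReal K * ∫⁻ y, g (x, y) :=
          mul_le_mul_right (setLIntegral_le_lintegral T _) _
  set A : ℝ≥0∞ := ∫⁻ x in Ω, ENNReal.ofReal (|u x| ^ p) with hA_def
  set G : ℝ≥0∞ := ∫⁻ q, g q with hG_def2
  have main : A * volume Ω ≤ ENNReal.ofReal K * G := by
    calc A * volume Ω
        = ∫⁻ x in Ω, ENNReal.ofReal (|u x| ^ p) * volume Ω :=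
          (lintegral_mul_const' _ _ hM_fin).symm
      _ ≤ ∫⁻ x in Ω, ENNReal.ofReal K * ∫⁻ y, g (x, y) := lintegral_mono fun x => key x
      _ = ENNReal.ofReal K * ∫⁻ x in Ω, ∫⁻ y, g (x, y) :=
          lintegral_const_mul' _ _ ENNReal.ofReal_ne_top
      _ ≤ ENNReal.ofReal K * ∫⁻ x, ∫⁻ y, g (x, y) :=
          mul_le_mul_right (setLIntegral_le_lintegral _ _) _
      _ = ENNReal.ofReal K * G := by
          rw [hG_def2, Measure.volume_eq_prod, lintegral_prod g hgm.aemeasurable]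
  -- convert to real
  have hmeas1 : Measurable (fun x : EuclideanSpace ℝ (Fin n) => |u x| ^ p) := by fun_prop
  have hLHS : ∫ x in Ω, |u x| ^ p = A.toReal := by
    rw [hA_def, integral_eq_lintegral_of_nonneg_ae
      (Filter.Eventually.of_forall fun x => by positivity) hmeas1.aestronglyMeasurable]
  have hmeas2 : Measurable (fun q : EuclideanSpace ℝ (Fin n) × EuclideanSpace ℝ (Fin n) =>
      |u q.1 - u q.2| ^ p / ‖q.1 - q.2‖ ^ ((n : ℝ) + s * p)) := by fun_prop
  have hGP : gagliardoP n s p u = G.toReal := by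
    rw [gagliardoP, integral_eq_lintegral_of_nonneg_ae (Filter.Eventually.of_forall hgnn)
      hmeas2.aestronglyMeasurable]
  have hG_fin : G ≠ ⊤ :=
    ((hasFiniteIntegral_iff_ofReal (Filter.Eventually.of_forall hgnn)).mp
      hIntG.hasFiniteIntegral).ne
  have hreal : A.toReal * m ≤ K * G.toReal := by
    have h1 : (A * volume Ω).toReal ≤ (ENNReal.ofReal K * G).toReal :=
      ENNReal.toReal_mono (ENNReal.mul_ne_top ENNReal.ofReal_ne_top hG_fin) main
    rwa [ENNReal.toReal_mul, ENNReal.toReal_mul, ENNReal.toReal_ofReal hK.le] at h1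
  have hK_eq : K = (2/ι) ^ (((n:ℝ) + s*p)/n) * m ^ (((n:ℝ) + s*p)/n) := by
    have e1 : 2 * m / ι = 2/ι * m := by ring
    rw [hK_def, hR_def, ← Real.rpow_mul (by positivity)]
    have e2 : 1 / (n:ℝ) * ((n:ℝ) + s*p) = ((n:ℝ) + s*p)/n := by ring
    rw [e2, e1, Real.mul_rpow (by positivity) hm.le]
  have hKm : K / m = (2/ι) ^ (((n:ℝ) + s*p)/n) * m ^ (s*p/n) := by
    rw [hK_eq, mul_div_assoc]
    congr 1
    have h4 : m ^ (((n:ℝ)+s*p)/n) / m = m ^ ((((n:ℝ)+s*p)/n) - 1) := by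
      rw [Real.rpow_sub hm, Real.rpow_one]
    rw [h4]
    congr 1
    field_simp
    ring
  rw [hLHS, hGP]
  calc A.toReal ≤ K * G.toReal / m := (le_div_iff₀ hm).mpr hreal
    _ = (K / m) * G.toReal := by ring
    _ = (2/ι) ^ (((n:ℝ) + s*p)/n) * m ^ (s*p/n) * G.toReal := by rw [hKm]
    _ = (2/ι) ^ (((n:ℝ) + s*p)/n) * (volume Ω).toReal ^ (s*p/n) * G.toReal := by rw [hm_def]
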